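/- arXiv:2507.03805 — 5 statements merged into one kernel-verified Lean document; each statement's English description precedes it below -/
import Mathlib

section
/- Let ε : ℝ³ × {1,2} → ℝ³ be measurable and assume that for almost every k ∈ ℝ³ one has ε(k,λ) · ε(k,μ) = δ_{λμ} for all λ, μ ∈ {1,2} and k · ε(k,λ) = 0 for λ ∈ {1,2}. Define Φ : L²(ℝ³ × {1,2}; ℂ) → L²(ℝ³; ℂ³) by (Φh)(k) = Σ_{λ=1}^{2} ε(k,λ) h(k,λ). Then Φ is a linear isometry whose range equals the set 𝔳 := { v ∈ L²(ℝ³; ℂ³) : k · v(k) = 0 for almost every k ∈ ℝ³ }, and for every v in this range one has (Φ⁻¹ v)(k,λ) = ε(k,λ) · v(k) for almost every (k,λ). -/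
open MeasureTheory
open scoped RealInnerProductSpace ENNReal

/-- The measure on `ℝ³ × {1,2}` (Lebesgue times counting), the one-photon configuration
space. -/
noncomputable def photonMeasure : Measure (EuclideanSpace ℝ (Fin 3) × Fin 2) :=
  (volume : Measure (EuclideanSpace ℝ (Fin 3))).prod Measure.count

/-- The measure on `ℝ³ × {1,2,3}` (Lebesgue times counting); `L²` of it is canonically
`L²(ℝ³; ℂ³)`, with the second coordinate the vector component. -/
noncomputable def vectorFieldMeasure : Measure (EuclideanSpace ℝ (Fin 3) × Fin 3) :=
  (volume : Measure (EuclideanSpace ℝ (Fin 3))).prod Measure.count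

namespace PolarAux


section Meas

variable {α : Type*} [MeasurableSpace α] {μ : Measure α} [SigmaFinite μ] {n : ℕ}

lemma prodCount_eq_sum : μ.prod (Measure.count : Measure (Fin n)) =
    Measure.sum fun i : Fin n => μ.map (·, i) := by
  rw [Measure.count, Measure.prod_sum_right]
  congr 1; ext i : 1; rw [Measure.prod_dirac]

lemma ae_prodCount_iff {P : α × Fin n → Prop} :
    (∀ᵐ p ∂μ.prod (Measure.count : Measure (Fin n)), P p) ↔ ∀ i, ∀ᵐ k ∂μ, P (k, i) := by
  rw [prodCount_eq_sum, Measure.ae_sum_iff]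
  refine forall_congr' fun i => ?_
  exact (MeasurableEmbedding.id.prodMk_right i).ae_map_iff

lemma lintegral_prodCount (f : α × Fin n → ℝ≥0∞) :
    ∫⁻ p, f p ∂μ.prod (Measure.count : Measure (Fin n)) = ∑ i : Fin n, ∫⁻ k, f (k, i) ∂μ := by
  rw [prodCount_eq_sum, lintegral_sum_measure, tsum_fintype]
  exact Finset.sum_congr rfl fun i _ =>
    (MeasurableEmbedding.id.prodMk_right i).lintegral_map f

lemma aesm_comp {f : α × Fin n → ℂ}
    (hf : AEStronglyMeasurable f (μ.prod (Measure.count : Measure (Fin n)))) (i : Fin n) :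
    AEStronglyMeasurable (fun k => f (k, i)) μ := by
  rw [prodCount_eq_sum] at hf
  have h1 : AEStronglyMeasurable f (μ.map (·, i)) := hf.mono_measure (Measure.le_sum _ i)
  exact ((MeasurableEmbedding.id.prodMk_right i).aestronglyMeasurable_map_iff).1 h1

lemma lint_norm_sq {f : α × Fin n → ℂ}
    (hf : AEStronglyMeasurable f (μ.prod (Measure.count : Measure (Fin n)))) :
    ∫⁻ p, (‖f p‖₊ : ℝ≥0∞) ^ 2 ∂μ.prod (Measure.count : Measure (Fin n)) =
      ∫⁻ k, ∑ i : Fin n, (‖f (k, i)‖₊ : ℝ≥0∞) ^ 2 ∂μ := by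
  rw [lintegral_prodCount]
  rw [lintegral_finset_sum' Finset.univ fun i _ => ((aesm_comp hf i).aemeasurable.nnnorm.coe_nnreal_ennreal.pow_const 2)]

lemma eLpNorm_two {α' : Type*} [MeasurableSpace α'] (ν : Measure α') (g : α' → ℂ) :
    eLpNorm g 2 ν = (∫⁻ x, (‖g x‖₊ : ℝ≥0∞) ^ 2 ∂ν) ^ (1/2 : ℝ) := by
  rw [eLpNorm_eq_lintegral_rpow_enorm_toReal two_ne_zero ENNReal.ofNat_ne_top]
  norm_num
  rfl

end Meas

section Alg

lemma iso_real (a : Fin 2 → Fin 3 → ℝ) (c : Fin 2 → ℂ)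
    (h : ∀ l m, ∑ i : Fin 3, a l i * a m i = if l = m then (1:ℝ) else 0) :
    ∑ i : Fin 3, ‖∑ l : Fin 2, (a l i : ℂ) * c l‖ ^ 2 = ∑ l : Fin 2, ‖c l‖ ^ 2 := by
  have h00 := h 0 0; have h01 := h 0 1; have h11 := h 1 1
  simp [Fin.sum_univ_three] at h00 h01 h11
  simp only [Fin.sum_univ_two, Fin.sum_univ_three, Complex.sq_norm,
    Complex.normSq_apply, Complex.add_re, Complex.add_im, Complex.mul_re, Complex.mul_im,
    Complex.ofReal_re, Complex.ofReal_im, zero_mul, sub_zero, zero_add]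
  linear_combination ((c 0).re^2+(c 0).im^2) * h00 + ((c 1).re^2+(c 1).im^2) * h11 +
    (2*(c 0).re*(c 1).re + 2*(c 0).im*(c 1).im) * h01

lemma bessel_w (a : Fin 2 → Fin 3 → ℝ) (w : Fin 3 → ℝ)
    (h : ∀ l m, ∑ i : Fin 3, a l i * a m i = if l = m then (1:ℝ) else 0) :
    (∑ i : Fin 3, a 0 i * w i) ^ 2 + (∑ i : Fin 3, a 1 i * w i) ^ 2 ≤ ∑ i : Fin 3, w i ^ 2 := by
  have h00 := h 0 0; have h01 := h 0 1; have h11 := h 1 1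
  simp [Fin.sum_univ_three] at h00 h01 h11 ⊢
  set p := a 0 0 * w 0 + a 0 1 * w 1 + a 0 2 * w 2 with hp
  set q := a 1 0 * w 0 + a 1 1 * w 1 + a 1 2 * w 2 with hq
  have key : (w 0 - p * a 0 0 - q * a 1 0)^2 + (w 1 - p * a 0 1 - q * a 1 1)^2
      + (w 2 - p * a 0 2 - q * a 1 2)^2 = (w 0^2 + w 1^2 + w 2^2) - p^2 - q^2 := by
    linear_combination p^2*h00 + q^2*h11 + 2*p*q*h01 + (-2*p)*hp.symm + (-2*q)*hq.symm
  nlinarith [sq_nonneg (w 0 - p * a 0 0 - q * a 1 0), sq_nonneg (w 1 - p * a 0 1 - q * a 1 1),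
    sq_nonneg (w 2 - p * a 0 2 - q * a 1 2)]

lemma bessel_real (a : Fin 2 → Fin 3 → ℝ) (c : Fin 3 → ℂ)
    (h : ∀ l m, ∑ i : Fin 3, a l i * a m i = if l = m then (1:ℝ) else 0) :
    ∑ l : Fin 2, ‖∑ i : Fin 3, (a l i : ℂ) * c i‖ ^ 2 ≤ ∑ i : Fin 3, ‖c i‖ ^ 2 := by
  have hre := bessel_w a (fun i => (c i).re) h
  have him := bessel_w a (fun i => (c i).im) h
  simp only [Fin.sum_univ_three] at hre him
  simp only [Fin.sum_univ_two, Fin.sum_univ_three, Complex.sq_norm,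
    Complex.normSq_apply, Complex.add_re, Complex.add_im, Complex.mul_re, Complex.mul_im,
    Complex.ofReal_re, Complex.ofReal_im, zero_mul, sub_zero, zero_add]
  nlinarith [hre, him]

lemma enn_of_real_sq (z : ℂ) : (‖z‖₊ : ℝ≥0∞) ^ 2 = ENNReal.ofReal (‖z‖ ^ 2) := by
  rw [ENNReal.ofReal_pow (norm_nonneg z), ofReal_norm]; rfl

lemma iso_enn (a : Fin 2 → Fin 3 → ℝ) (c : Fin 2 → ℂ)
    (h : ∀ l m, ∑ i : Fin 3, a l i * a m i = if l = m then (1:ℝ) else 0) :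
    ∑ i : Fin 3, (‖∑ l : Fin 2, (a l i : ℂ) * c l‖₊ : ℝ≥0∞) ^ 2
      = ∑ l : Fin 2, (‖c l‖₊ : ℝ≥0∞) ^ 2 := by
  simp_rw [enn_of_real_sq]
  rw [← ENNReal.ofReal_sum_of_nonneg (fun i _ => by positivity),
    ← ENNReal.ofReal_sum_of_nonneg (fun l _ => by positivity)]
  exact congrArg _ (iso_real a c h)

lemma bessel_enn (a : Fin 2 → Fin 3 → ℝ) (c : Fin 3 → ℂ)
    (h : ∀ l m, ∑ i : Fin 3, a l i * a m i = if l = m then (1:ℝ) else 0) :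
    ∑ l : Fin 2, (‖∑ i : Fin 3, (a l i : ℂ) * c i‖₊ : ℝ≥0∞) ^ 2
      ≤ ∑ i : Fin 3, (‖c i‖₊ : ℝ≥0∞) ^ 2 := by
  simp_rw [enn_of_real_sq]
  rw [← ENNReal.ofReal_sum_of_nonneg (fun i _ => by positivity),
    ← ENNReal.ofReal_sum_of_nonneg (fun l _ => by positivity)]
  exact ENNReal.ofReal_le_ofReal (bessel_real a c h)

lemma inner_to_sum (x y : (EuclideanSpace ℝ (Fin 3))) : ⟪x, y⟫ = ∑ i : Fin 3, x i * y i := by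
  rw [PiLp.inner_apply]; simp [RCLike.inner_apply]
  exact Finset.sum_congr rfl fun _ _ => mul_comm _ _

lemma reconstruct_w (a : Fin 2 → (EuclideanSpace ℝ (Fin 3))) (k : (EuclideanSpace ℝ (Fin 3))) (w : (EuclideanSpace ℝ (Fin 3)))
    (h : ∀ l m, ⟪a l, a m⟫ = if l = m then (1:ℝ) else 0)
    (hka : ∀ l, ⟪k, a l⟫ = 0) (hk : k ≠ 0) (hw : ⟪k, w⟫ = 0) :
    ∀ i, w i = a 0 i * ⟪a 0, w⟫ + a 1 i * ⟪a 1, w⟫ := by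
  set f : Fin 3 → (EuclideanSpace ℝ (Fin 3)) := ![a 0, a 1, ‖k‖⁻¹ • k] with hf
  have hknorm : ‖k‖ ≠ 0 := norm_ne_zero_iff.2 hk
  have h00 : ⟪a 0, a 0⟫ = 1 := by simpa using h 0 0
  have h01 : ⟪a 0, a 1⟫ = 0 := by simpa using h 0 1
  have h10 : ⟪a 1, a 0⟫ = 0 := by simpa using h 1 0
  have h11 : ⟪a 1, a 1⟫ = 1 := by simpa using h 1 1
  have hs0 : ⟪a 0, ‖k‖⁻¹ • k⟫ = 0 := by
    rw [real_inner_smul_right, real_inner_comm, hka 0, mul_zero]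
  have hs1 : ⟪a 1, ‖k‖⁻¹ • k⟫ = 0 := by
    rw [real_inner_smul_right, real_inner_comm, hka 1, mul_zero]
  have hs0' : ⟪(‖k‖⁻¹ • k : (EuclideanSpace ℝ (Fin 3))), a 0⟫ = 0 := by rw [real_inner_smul_left, hka 0, mul_zero]
  have hs1' : ⟪(‖k‖⁻¹ • k : (EuclideanSpace ℝ (Fin 3))), a 1⟫ = 0 := by rw [real_inner_smul_left, hka 1, mul_zero]
  have hkk : ⟪(‖k‖⁻¹ • k : (EuclideanSpace ℝ (Fin 3))), ‖k‖⁻¹ • k⟫ = 1 := by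
    rw [real_inner_smul_left, real_inner_smul_right, real_inner_self_eq_norm_mul_norm]
    field_simp
  have hon : Orthonormal ℝ f := by
    rw [orthonormal_iff_ite]
    intro i j
    fin_cases i <;> fin_cases j <;>
      simp only [hf, Fin.isValue, Matrix.cons_val_zero, Matrix.cons_val_one, Matrix.head_cons,
        Matrix.cons_val_two, Matrix.tail_cons] <;>
      norm_num [h00, h01, h10, h11, hs0, hs1, hs0', hs1', hkk] <;>
      exact Or.inl (by rw [← pow_eq_one_iff_of_nonneg (norm_nonneg _) two_ne_zero, ← real_inner_self_eq_norm_sq]; assumption)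
  have hspan : ⊤ ≤ Submodule.span ℝ (Set.range f) := by
    rw [hon.linearIndependent.span_eq_top_of_card_eq_finrank]
    simp [finrank_euclideanSpace]
  let b : OrthonormalBasis (Fin 3) ℝ (EuclideanSpace ℝ (Fin 3)) := OrthonormalBasis.mk hon hspan
  have hb : ∀ j, b j = f j := fun j => by simp [b]
  have hx := b.sum_repr' w
  intro i
  have h2 := congrArg (fun v : (EuclideanSpace ℝ (Fin 3)) => v i) hx
  simp only [Fin.sum_univ_three, PiLp.add_apply, PiLp.smul_apply, smul_eq_mul, hb] at h2
  have hfw : ⟪f 2, w⟫ = 0 := by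
    show ⟪(‖k‖⁻¹ • k : (EuclideanSpace ℝ (Fin 3))), w⟫ = 0
    rw [real_inner_smul_left, hw, mul_zero]
  rw [hfw] at h2
  have hf0 : f 0 = a 0 := rfl
  have hf1 : f 1 = a 1 := rfl
  rw [hf0, hf1] at h2
  rw [← h2]; ring

lemma reconstructC (a : Fin 2 → (EuclideanSpace ℝ (Fin 3))) (k : (EuclideanSpace ℝ (Fin 3))) (c : Fin 3 → ℂ)
    (h : ∀ l m, ⟪a l, a m⟫ = if l = m then (1:ℝ) else 0)
    (hka : ∀ l, ⟪k, a l⟫ = 0) (hk : k ≠ 0)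
    (hc : ∑ i : Fin 3, (k i : ℂ) * c i = 0) :
    ∀ i, c i = ∑ l : Fin 2, (a l i : ℂ) * ∑ j : Fin 3, (a l j : ℂ) * c j := by
  have hcre : ∑ i : Fin 3, k i * (c i).re = 0 := by
    have := congrArg Complex.re hc
    simpa [Complex.re_sum] using this
  have hcim : ∑ i : Fin 3, k i * (c i).im = 0 := by
    have := congrArg Complex.im hc
    simpa [Complex.im_sum] using this
  set wre : (EuclideanSpace ℝ (Fin 3)) := WithLp.toLp 2 (fun i => (c i).re : ∀ _ : Fin 3, ℝ) with hwre
  set wim : (EuclideanSpace ℝ (Fin 3)) := WithLp.toLp 2 (fun i => (c i).im : ∀ _ : Fin 3, ℝ) with hwim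
  have hre := reconstruct_w a k wre h hka hk (by rw [PiLp.inner_apply]; simpa [hwre, mul_comm] using hcre)
  have him := reconstruct_w a k wim h hka hk (by rw [PiLp.inner_apply]; simpa [hwim, mul_comm] using hcim)
  intro i
  have hre' := hre i
  have him' := him i
  rw [PiLp.inner_apply, PiLp.inner_apply] at hre' him'
  simp only [hwre, hwim, RCLike.inner_apply, conj_trivial, Fin.sum_univ_three] at hre' him'
  apply Complex.ext <;>
    simp only [Fin.sum_univ_two, Fin.sum_univ_three, Complex.add_re, Complex.add_im,
      Complex.mul_re, Complex.mul_im, Complex.ofReal_re, Complex.ofReal_im, Complex.re_sum,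
      Complex.im_sum, zero_mul, mul_zero, sub_zero, zero_add, add_zero] <;>
    linarith [hre', him']

lemma inv_pointwise (a : Fin 2 → (EuclideanSpace ℝ (Fin 3)))
    (h : ∀ l m, ⟪a l, a m⟫ = if l = m then (1:ℝ) else 0) (c : Fin 2 → ℂ) :
    ∀ l, ∑ i : Fin 3, (a l i : ℂ) * (∑ m : Fin 2, (a m i : ℂ) * c m) = c l := by
  intro l
  have h' : ∀ m, ∑ i : Fin 3, a l i * a m i = if l = m then (1:ℝ) else 0 := by
    intro m; rw [← inner_to_sum]; exact h l m
  have key : ∀ m, ∑ i : Fin 3, (a l i : ℂ) * ((a m i : ℂ) * c m)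
      = ((∑ i : Fin 3, a l i * a m i : ℝ) : ℂ) * c m := by
    intro m
    push_cast
    rw [Finset.sum_mul]
    exact Finset.sum_congr rfl fun i _ => by ring
  simp_rw [Finset.mul_sum]
  rw [Finset.sum_comm]
  simp_rw [key, h']
  simp [apply_ite (fun x : ℝ => (x : ℂ)), ite_mul]

lemma transversal_pointwise (a : Fin 2 → (EuclideanSpace ℝ (Fin 3))) (k : (EuclideanSpace ℝ (Fin 3)))
    (hka : ∀ l, ⟪k, a l⟫ = 0) (c : Fin 2 → ℂ) :
    ∑ i : Fin 3, (k i : ℂ) * (∑ l : Fin 2, (a l i : ℂ) * c l) = 0 := by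
  have h' : ∀ l, ∑ i : Fin 3, k i * a l i = 0 := by
    intro l; rw [← inner_to_sum]; exact hka l
  have key : ∀ l, ∑ i : Fin 3, (k i : ℂ) * ((a l i : ℂ) * c l)
      = ((∑ i : Fin 3, k i * a l i : ℝ) : ℂ) * c l := by
    intro l
    push_cast
    rw [Finset.sum_mul]
    exact Finset.sum_congr rfl fun i _ => by ring
  simp_rw [Finset.mul_sum]
  rw [Finset.sum_comm]
  simp_rw [key, h']
  simp

end Alg


section TS

variable (ε : EuclideanSpace ℝ (Fin 3) × Fin 2 → EuclideanSpace ℝ (Fin 3))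

noncomputable def Tmap (f : (EuclideanSpace ℝ (Fin 3)) × Fin 2 → ℂ) : (EuclideanSpace ℝ (Fin 3)) × Fin 3 → ℂ :=
  fun p => ∑ l : Fin 2, ((ε (p.1, l) p.2 : ℝ) : ℂ) * f (p.1, l)

noncomputable def Smap (g : (EuclideanSpace ℝ (Fin 3)) × Fin 3 → ℂ) : (EuclideanSpace ℝ (Fin 3)) × Fin 2 → ℂ :=
  fun p => ∑ i : Fin 3, ((ε p i : ℝ) : ℂ) * g (p.1, i)

lemma ae_photon {P : (EuclideanSpace ℝ (Fin 3)) × Fin 2 → Prop} :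
    (∀ᵐ p ∂photonMeasure, P p) ↔ ∀ l, ∀ᵐ k ∂(volume : Measure (EuclideanSpace ℝ (Fin 3))), P (k, l) :=
  ae_prodCount_iff

lemma ae_vector {P : (EuclideanSpace ℝ (Fin 3)) × Fin 3 → Prop} :
    (∀ᵐ p ∂vectorFieldMeasure, P p) ↔ ∀ i, ∀ᵐ k ∂(volume : Measure (EuclideanSpace ℝ (Fin 3))), P (k, i) :=
  ae_prodCount_iff

variable {ε}

lemma T_congr {f f' : (EuclideanSpace ℝ (Fin 3)) × Fin 2 → ℂ} (h : f =ᵐ[photonMeasure] f') :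
    Tmap ε f =ᵐ[vectorFieldMeasure] Tmap ε f' := by
  rw [Filter.EventuallyEq, ae_vector]
  rw [Filter.EventuallyEq, ae_photon] at h
  intro i
  filter_upwards [h 0, h 1] with k e0 e1
  simp only [Tmap, Fin.sum_univ_two, e0, e1]

lemma S_congr {g g' : (EuclideanSpace ℝ (Fin 3)) × Fin 3 → ℂ} (h : g =ᵐ[vectorFieldMeasure] g') :
    Smap ε g =ᵐ[photonMeasure] Smap ε g' := by
  rw [Filter.EventuallyEq, ae_photon]
  rw [Filter.EventuallyEq, ae_vector] at h
  intro l
  filter_upwards [h 0, h 1, h 2] with k e0 e1 e2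
  simp only [Smap, Fin.sum_univ_three, e0, e1, e2]

variable (hmeas : Measurable ε)
include hmeas

lemma coeff_meas (l : Fin 2) : Measurable fun p : (EuclideanSpace ℝ (Fin 3)) × Fin 3 => (ε (p.1, l) p.2 : ℝ) := by
  apply measurable_from_prod_countable_left
  intro j
  exact (measurable_pi_apply j).comp ((WithLp.measurable_ofLp 2 _).comp (hmeas.comp (measurable_id.prodMk measurable_const)))

lemma coeff_meas' (i : Fin 3) : Measurable fun p : (EuclideanSpace ℝ (Fin 3)) × Fin 2 => (ε p i : ℝ) :=
  (measurable_pi_apply i).comp ((WithLp.measurable_ofLp 2 _).comp hmeas)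

lemma T_sm {f : (EuclideanSpace ℝ (Fin 3)) × Fin 2 → ℂ} (hf : StronglyMeasurable f) :
    StronglyMeasurable (Tmap ε f) := by
  apply Finset.stronglyMeasurable_fun_sum
  intro l _
  exact ((Complex.measurable_ofReal.comp (coeff_meas hmeas l)).stronglyMeasurable).mul
    (hf.comp_measurable (measurable_fst.prodMk measurable_const))

lemma S_sm {g : (EuclideanSpace ℝ (Fin 3)) × Fin 3 → ℂ} (hg : StronglyMeasurable g) :
    StronglyMeasurable (Smap ε g) := by
  apply Finset.stronglyMeasurable_fun_sum
  intro i _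
  exact ((Complex.measurable_ofReal.comp (coeff_meas' hmeas i)).stronglyMeasurable).mul
    (hg.comp_measurable (measurable_fst.prodMk measurable_const))

lemma T_aesm {f : (EuclideanSpace ℝ (Fin 3)) × Fin 2 → ℂ} (hf : AEStronglyMeasurable f photonMeasure) :
    AEStronglyMeasurable (Tmap ε f) vectorFieldMeasure :=
  ((T_sm hmeas hf.stronglyMeasurable_mk).aestronglyMeasurable).congr
    (T_congr hf.ae_eq_mk).symm

lemma S_aesm {g : (EuclideanSpace ℝ (Fin 3)) × Fin 3 → ℂ} (hg : AEStronglyMeasurable g vectorFieldMeasure) :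
    AEStronglyMeasurable (Smap ε g) photonMeasure :=
  ((S_sm hmeas hg.stronglyMeasurable_mk).aestronglyMeasurable).congr
    (S_congr hg.ae_eq_mk).symm

omit hmeas

variable (hON : ∀ᵐ k ∂(volume : Measure (EuclideanSpace ℝ (Fin 3))),
      (∀ l m : Fin 2, ⟪ε (k, l), ε (k, m)⟫ = if l = m then (1 : ℝ) else 0) ∧
      ∀ l : Fin 2, ⟪k, ε (k, l)⟫ = 0)
include hON

lemma T_lint {f : (EuclideanSpace ℝ (Fin 3)) × Fin 2 → ℂ} (hf : AEStronglyMeasurable f photonMeasure)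
    (hTf : AEStronglyMeasurable (Tmap ε f) vectorFieldMeasure) :
    ∫⁻ p, (‖Tmap ε f p‖₊ : ℝ≥0∞) ^ 2 ∂vectorFieldMeasure
      = ∫⁻ p, (‖f p‖₊ : ℝ≥0∞) ^ 2 ∂photonMeasure := by
  rw [show vectorFieldMeasure = (volume : Measure (EuclideanSpace ℝ (Fin 3))).prod Measure.count from rfl] at hTf ⊢
  rw [show photonMeasure = (volume : Measure (EuclideanSpace ℝ (Fin 3))).prod Measure.count from rfl] at hf ⊢
  rw [lint_norm_sq hTf, lint_norm_sq hf]
  apply lintegral_congr_ae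
  filter_upwards [hON] with k hk
  have h' : ∀ l m, ∑ i : Fin 3, ε (k, l) i * ε (k, m) i = if l = m then (1:ℝ) else 0 :=
    fun l m => by rw [← inner_to_sum]; exact hk.1 l m
  exact iso_enn (fun l i => ε (k, l) i) (fun l => f (k, l)) h'

lemma S_lint_le {g : (EuclideanSpace ℝ (Fin 3)) × Fin 3 → ℂ} (hg : AEStronglyMeasurable g vectorFieldMeasure)
    (hSg : AEStronglyMeasurable (Smap ε g) photonMeasure) :
    ∫⁻ p, (‖Smap ε g p‖₊ : ℝ≥0∞) ^ 2 ∂photonMeasure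
      ≤ ∫⁻ p, (‖g p‖₊ : ℝ≥0∞) ^ 2 ∂vectorFieldMeasure := by
  rw [show vectorFieldMeasure = (volume : Measure (EuclideanSpace ℝ (Fin 3))).prod Measure.count from rfl] at hg ⊢
  rw [show photonMeasure = (volume : Measure (EuclideanSpace ℝ (Fin 3))).prod Measure.count from rfl] at hSg ⊢
  rw [lint_norm_sq hSg, lint_norm_sq hg]
  apply lintegral_mono_ae
  filter_upwards [hON] with k hk
  have h' : ∀ l m, ∑ i : Fin 3, ε (k, l) i * ε (k, m) i = if l = m then (1:ℝ) else 0 :=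
    fun l m => by rw [← inner_to_sum]; exact hk.1 l m
  exact bessel_enn (fun l i => ε (k, l) i) (fun i => g (k, i)) h'

end TS

end PolarAux


namespace PolarAux

lemma T_add (ε : EuclideanSpace ℝ (Fin 3) × Fin 2 → EuclideanSpace ℝ (Fin 3))
    (f g : EuclideanSpace ℝ (Fin 3) × Fin 2 → ℂ) :
    Tmap ε (f + g) = Tmap ε f + Tmap ε g := by
  funext p
  simp only [Tmap, Pi.add_apply]
  rw [← Finset.sum_add_distrib]
  exact Finset.sum_congr rfl fun l _ => by ring

lemma T_smul (ε : EuclideanSpace ℝ (Fin 3) × Fin 2 → EuclideanSpace ℝ (Fin 3))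
    (c : ℂ) (f : EuclideanSpace ℝ (Fin 3) × Fin 2 → ℂ) :
    Tmap ε (c • f) = c • Tmap ε f := by
  funext p
  simp only [Tmap, Pi.smul_apply, smul_eq_mul, Finset.mul_sum]
  exact Finset.sum_congr rfl fun l _ => by ring

lemma ae_ne_zero : ∀ᵐ k ∂(volume : Measure (EuclideanSpace ℝ (Fin 3))), k ≠ 0 := by
  rw [MeasureTheory.ae_iff]
  simpa only [ne_eq, not_not, Set.setOf_eq_eq_singleton] using
    measure_singleton (0 : EuclideanSpace ℝ (Fin 3))

end PolarAux


open PolarAux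

/-- Given measurable polarization vectors `ε(·,1), ε(·,2)` which are a.e.
orthonormal and transversal, the map `(Φh)(k) = ∑_λ ε(k,λ) h(k,λ)` is a linear isometry of
`L²(ℝ³ × {1,2})` onto the space of divergence-free (in momentum space: transversal) square
integrable vector fields, with inverse `(Φ⁻¹v)(k,λ) = ε(k,λ)·v(k)`. -/
theorem polarization_identification
    (ε : EuclideanSpace ℝ (Fin 3) × Fin 2 → EuclideanSpace ℝ (Fin 3))
    (hmeas : Measurable ε)
    (hε : ∀ᵐ k ∂(volume : Measure (EuclideanSpace ℝ (Fin 3))),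
      (∀ l m : Fin 2, ⟪ε (k, l), ε (k, m)⟫ = if l = m then (1 : ℝ) else 0) ∧
      ∀ l : Fin 2, ⟪k, ε (k, l)⟫ = 0) :
    ∃ Φ : Lp ℂ 2 photonMeasure →ₗᵢ[ℂ] Lp ℂ 2 vectorFieldMeasure,
      (∀ h : Lp ℂ 2 photonMeasure,
        (Φ h : EuclideanSpace ℝ (Fin 3) × Fin 3 → ℂ)
          =ᵐ[vectorFieldMeasure]
            fun p => ∑ l : Fin 2, ((ε (p.1, l) p.2 : ℝ) : ℂ) * h (p.1, l)) ∧
      {v : Lp ℂ 2 vectorFieldMeasure | ∃ h, Φ h = v}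
        = {v : Lp ℂ 2 vectorFieldMeasure |
            ∀ᵐ k ∂(volume : Measure (EuclideanSpace ℝ (Fin 3))),
              ∑ i : Fin 3, ((k i : ℝ) : ℂ) * v (k, i) = 0} ∧
      ∀ (h : Lp ℂ 2 photonMeasure) (v : Lp ℂ 2 vectorFieldMeasure), Φ h = v →
        (h : EuclideanSpace ℝ (Fin 3) × Fin 2 → ℂ)
          =ᵐ[photonMeasure]
            fun p => ∑ i : Fin 3, ((ε p i : ℝ) : ℂ) * v (p.1, i) := by
  classical
  have normT : ∀ h : Lp ℂ 2 photonMeasure,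
      eLpNorm (Tmap ε ⇑h) 2 vectorFieldMeasure = eLpNorm (⇑h) 2 photonMeasure := by
    intro h
    rw [eLpNorm_two, eLpNorm_two,
      T_lint hε (Lp.aestronglyMeasurable h) (T_aesm hmeas (Lp.aestronglyMeasurable h))]
  have memT : ∀ h : Lp ℂ 2 photonMeasure, MemLp (Tmap ε ⇑h) 2 vectorFieldMeasure := by
    intro h
    exact ⟨T_aesm hmeas (Lp.aestronglyMeasurable h), (normT h) ▸ Lp.eLpNorm_lt_top h⟩
  let Φ₀ : Lp ℂ 2 photonMeasure →ₗ[ℂ] Lp ℂ 2 vectorFieldMeasure :=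
    { toFun := fun h => (memT h).toLp _
      map_add' := by
        intro h g
        rw [← MemLp.toLp_add (memT h) (memT g)]
        apply MemLp.toLp_congr
        exact (T_congr (Lp.coeFn_add h g)).trans (by rw [T_add])
      map_smul' := by
        intro c h
        simp only [RingHom.id_apply]
        rw [← MemLp.toLp_const_smul c (memT h)]
        apply MemLp.toLp_congr
        exact (T_congr (Lp.coeFn_smul c h)).trans (by rw [T_smul]) }
  have hΦ₀ : ∀ h : Lp ℂ 2 photonMeasure, Φ₀ h = (memT h).toLp _ := fun _ => rfl
  let Φiso : Lp ℂ 2 photonMeasure →ₗᵢ[ℂ] Lp ℂ 2 vectorFieldMeasure :=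
    { toLinearMap := Φ₀
      norm_map' := by
        intro h
        show ‖Φ₀ h‖ = ‖h‖
        rw [hΦ₀ h, Lp.norm_def, Lp.norm_def,
          eLpNorm_congr_ae (MemLp.coeFn_toLp (memT h)), normT h]}
  have hΦ : ∀ h : Lp ℂ 2 photonMeasure,
      (Φiso h : EuclideanSpace ℝ (Fin 3) × Fin 3 → ℂ) =ᵐ[vectorFieldMeasure] Tmap ε ⇑h :=
    fun h => MemLp.coeFn_toLp (memT h)
  refine ⟨Φiso, fun h => hΦ h, ?_, ?_⟩
  · ext v
    simp only [Set.mem_setOf_eq]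
    constructor
    · rintro ⟨h, rfl⟩
      have hv := hΦ h
      rw [Filter.EventuallyEq, ae_vector] at hv
      filter_upwards [hv 0, hv 1, hv 2, hε] with k e0 e1 e2 hk
      rw [Fin.sum_univ_three, e0, e1, e2]
      have := transversal_pointwise (fun l => ε (k, l)) k hk.2 (fun l => (h : _ → ℂ) (k, l))
      rw [Fin.sum_univ_three] at this
      exact this
    · intro hv
      have hSv : MemLp (Smap ε ⇑v) 2 photonMeasure := by
        refine ⟨S_aesm hmeas (Lp.aestronglyMeasurable v), ?_⟩
        rw [eLpNorm_two]
        refine lt_of_le_of_lt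
          (ENNReal.rpow_le_rpow
            (S_lint_le hε (Lp.aestronglyMeasurable v)
              (S_aesm hmeas (Lp.aestronglyMeasurable v))) (by norm_num)) ?_
        rw [← eLpNorm_two]
        exact Lp.eLpNorm_lt_top v
      refine ⟨hSv.toLp _, ?_⟩
      apply Lp.ext
      have h1 := hΦ (hSv.toLp _)
      have h2 : Tmap ε ⇑(hSv.toLp _) =ᵐ[vectorFieldMeasure] Tmap ε (Smap ε ⇑v) :=
        T_congr (MemLp.coeFn_toLp hSv)
      have h3 : Tmap ε (Smap ε ⇑v) =ᵐ[vectorFieldMeasure] ⇑v := by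
        rw [Filter.EventuallyEq, ae_vector]
        intro i
        filter_upwards [hε, hv, ae_ne_zero] with k hk hvk hk0
        exact (reconstructC (fun l => ε (k, l)) k (fun j => (v : _ → ℂ) (k, j))
          hk.1 hk.2 hk0 hvk i).symm
      exact h1.trans (h2.trans h3)
  · intro h v hΦh
    have hv : (v : EuclideanSpace ℝ (Fin 3) × Fin 3 → ℂ) =ᵐ[vectorFieldMeasure] Tmap ε ⇑h := by
      rw [← hΦh]; exact hΦ h
    show (h : EuclideanSpace ℝ (Fin 3) × Fin 2 → ℂ) =ᵐ[photonMeasure] Smap ε ⇑v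
    rw [Filter.EventuallyEq, ae_photon]
    intro l
    rw [Filter.EventuallyEq, ae_vector] at hv
    filter_upwards [hv 0, hv 1, hv 2, hε] with k e0 e1 e2 hk
    show (h : _ → ℂ) (k, l) = Smap ε ⇑v (k, l)
    have key := inv_pointwise (fun m => ε (k, m)) hk.1 (fun m => (h : _ → ℂ) (k, m)) l
    rw [Fin.sum_univ_three] at key
    show (h : _ → ℂ) (k, l) = ∑ i : Fin 3, ((ε (k, l) i : ℝ) : ℂ) * (v : _ → ℂ) (k, i)
    rw [Fin.sum_univ_three, e0, e1, e2]
    exact key.symm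
end

section
/- Let H be a complex inner product space, let T : H → H satisfy ⟨T x, T y⟩ = conj(⟨x, y⟩) for all x, y ∈ H and T(T x) = −x for all x ∈ H, and let A : H → H be a linear map commuting with T, i.e., A ∘ T = T ∘ A. If E ∈ ℝ and ψ ∈ H is a nonzero vector with A ψ = E ψ, then T ψ is also a nonzero vector with A (T ψ) = E (T ψ) and ⟨ψ, T ψ⟩ = 0; in particular the eigenspace of A for the eigenvalue E has dimension at least two. -/
open scoped ComplexInnerProductSpace

/-- Kramers degeneracy. If `T` is antiunitary with `T² = -1` and `A` is a
linear operator commuting with `T`, then for any nonzero eigenvector `ψ` of `A` with real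
eigenvalue `E`, the vector `Tψ` is a nonzero eigenvector for the same eigenvalue, orthogonal
to `ψ`; in particular the eigenspace has dimension at least two. -/
theorem kramers_degeneracy
    {H : Type*} [NormedAddCommGroup H] [InnerProductSpace ℂ H]
    (T : H → H)
    (hT : ∀ x y : H, ⟪T x, T y⟫ = (starRingEnd ℂ) ⟪x, y⟫)
    (hT2 : ∀ x : H, T (T x) = -x)
    (A : H →ₗ[ℂ] H)
    (hcomm : ∀ x : H, A (T x) = T (A x))
    (E : ℝ) (ψ : H) (hψ : ψ ≠ 0) (heig : A ψ = (E : ℂ) • ψ) :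
    T ψ ≠ 0 ∧ A (T ψ) = (E : ℂ) • T ψ ∧ ⟪ψ, T ψ⟫ = 0 ∧
      2 ≤ Module.rank ℂ (LinearMap.ker (A - (E : ℂ) • LinearMap.id)) := by
  -- T is surjective
  have hsurj : ∀ y : H, T (T (-y)) = y := by
    intro y; rw [hT2]; simp
  -- a vector orthogonal to everything in the range of T is zero
  have hzero : ∀ w : H, (∀ z : H, ⟪w, T z⟫ = 0) → w = 0 := by
    intro w hw
    have h0 : ⟪w, w⟫ = 0 := by
      have := hw (T (-w)); rwa [hsurj] at this
    exact inner_self_eq_zero.mp h0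
  -- T is conjugate-homogeneous
  have hsmul : ∀ (c : ℂ) (x : H), T (c • x) = (starRingEnd ℂ) c • T x := by
    intro c x
    have h : T (c • x) - (starRingEnd ℂ) c • T x = 0 := by
      apply hzero
      intro z
      simp only [inner_sub_left, inner_smul_left, hT, map_mul,
        RingHomCompTriple.comp_apply, starRingEnd_self_apply]
      ring
    exact sub_eq_zero.mp h
  -- Tψ ≠ 0
  have hTψ : T ψ ≠ 0 := by
    intro h0
    apply hψ
    have : ⟪ψ, ψ⟫ = 0 := by
      have := hT ψ ψ
      rw [h0] at this
      simp only [inner_zero_left] at this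
      have := this.symm
      simpa using congrArg (starRingEnd ℂ) this
    exact inner_self_eq_zero.mp this
  -- Tψ is an eigenvector
  have heig' : A (T ψ) = (E : ℂ) • T ψ := by
    rw [hcomm, heig, hsmul]
    norm_num
  -- orthogonality
  have horth : ⟪ψ, T ψ⟫ = 0 := by
    have hz : ⟪T ψ, ψ⟫ = (0 : ℂ) := by
      have h1 := hT ψ (T ψ)
      rw [hT2, inner_neg_right, inner_conj_symm] at h1
      linear_combination (-1/2 : ℂ) * h1
    rw [← inner_conj_symm, hz, map_zero]
  refine ⟨hTψ, heig', horth, ?_⟩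
  -- rank bound
  set K := LinearMap.ker (A - (E : ℂ) • LinearMap.id) with hK
  have hψK : ψ ∈ K := by
    simp [hK, LinearMap.mem_ker, heig, sub_eq_zero]
  have hTψK : T ψ ∈ K := by
    simp [hK, LinearMap.mem_ker, heig', sub_eq_zero]
  set v : Fin 2 → K := ![⟨ψ, hψK⟩, ⟨T ψ, hTψK⟩] with hv
  have hli : LinearIndependent ℂ v := by
    apply LinearIndependent.of_comp K.subtype
    have hcomp : (K.subtype ∘ v) = ![ψ, T ψ] := by
      ext i
      fin_cases i <;> simp [hv]
    rw [hcomp]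
    rw [LinearIndependent.pair_iff]
    intro a b hab
    have h1 : ⟪ψ, a • ψ + b • T ψ⟫ = 0 := by rw [hab]; simp
    rw [inner_add_right, inner_smul_right, inner_smul_right, horth] at h1
    have ha : a = 0 := by
      have hψ2 : ⟪ψ, ψ⟫ ≠ 0 := fun h => hψ (inner_self_eq_zero.mp h)
      rw [mul_zero, add_zero] at h1
      exact (mul_eq_zero.mp h1).resolve_right hψ2
    have hb : b = 0 := by
      rw [ha, zero_smul, zero_add] at hab
      rcases smul_eq_zero.mp hab with h | h
      · exact h
      · exact absurd h hTψ
    exact ⟨ha, hb⟩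
  have h2 := hli.cardinal_lift_le_rank
  simp only [Cardinal.mk_fin, Nat.cast_ofNat, Cardinal.lift_ofNat] at h2
  exact_mod_cast Cardinal.lift_le.mp (le_trans (by norm_num) h2)
end

section
/- Let H be a complex inner product space, let T : H → H satisfy ⟨T x, T y⟩ = conj(⟨x, y⟩) for all x, y ∈ H and T(T x) = −x for all x ∈ H. Let V ⊆ H be a complex linear subspace of dimension exactly 2 that is invariant under T (i.e., T(V) ⊆ V). Then every complex linear subspace W ⊆ V with T(W) ⊆ W and W ≠ {0} satisfies W = V; that is, T acts irreducibly on V. -/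
open scoped ComplexInnerProductSpace

/-- Kramers irreducibility. If `T` is antiunitary with `T² = -1` and
`V` is a two-dimensional complex subspace invariant under `T`, then any nonzero
`T`-invariant subspace of `V` equals `V`, i.e. `T` acts irreducibly on `V`. -/
theorem kramers_irreducibility
    {H : Type*} [NormedAddCommGroup H] [InnerProductSpace ℂ H]
    (T : H → H)
    (hT : ∀ x y : H, ⟪T x, T y⟫ = (starRingEnd ℂ) ⟪x, y⟫)
    (hT2 : ∀ x : H, T (T x) = -x)
    (V : Submodule ℂ H)
    (hdim : Module.finrank ℂ V = 2)
    (hinv : ∀ x ∈ V, T x ∈ V) :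
    ∀ W : Submodule ℂ H, W ≤ V → (∀ x ∈ W, T x ∈ W) → W ≠ ⊥ → W = V := by
  intro W hWV hWinv hWne
  have hVfin : FiniteDimensional ℂ V := by
    apply FiniteDimensional.of_finrank_pos
    omega
  obtain ⟨x, hxW, hx0⟩ := Submodule.exists_mem_ne_zero_of_ne_bot hWne
  -- Tx ≠ 0
  have hTx0 : T x ≠ 0 := by
    intro h
    have := hT2 x
    rw [h] at this
    -- T 0 = -x ; also T 0 = ?  we get x = - T 0, but need T 0 value.
    -- Instead: ⟪T x, T x⟫ = conj ⟪x,x⟫ ≠ 0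
    have h2 := hT x x
    rw [h] at h2
    simp at h2
    exact hx0 (by simpa using h2.symm)
  -- orthogonality : ⟪T x, x⟫ = 0
  have horth : ⟪T x, x⟫ = 0 := by
    have h1 := hT x (T x)  -- ⟪T x, T (T x)⟫ = conj ⟪x, T x⟫
    rw [hT2 x] at h1
    rw [inner_neg_right] at h1
    have h2 : (starRingEnd ℂ) ⟪x, T x⟫ = ⟪T x, x⟫ := inner_conj_symm _ _
    rw [h2] at h1
    linear_combination -h1 / 2
  have horth' : ⟪x, T x⟫ = 0 := by
    rw [← inner_conj_symm, horth, map_zero]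
  -- linear independence of x, T x
  have hli : LinearIndependent ℂ ![x, T x] := by
    rw [LinearIndependent.pair_iff]
    intro s t hst
    have hs : s = 0 := by
      have := congrArg (fun z => ⟪x, z⟫) hst
      simp [inner_add_right, inner_smul_right, horth'] at this
      rcases this with h | h
      · exact h
      · exact absurd h hx0
    subst hs
    simp only [zero_smul, zero_add] at hst
    have ht : t = 0 := by
      rcases smul_eq_zero.mp hst with h | h
      · exact h
      · exact absurd h hTx0
    exact ⟨rfl, ht⟩
  -- span of {x, T x} inside W has finrank 2
  have hspan : Submodule.span ℂ (Set.range ![x, T x]) ≤ W := by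
    rw [Submodule.span_le]
    rintro y ⟨i, rfl⟩
    fin_cases i
    · exact hxW
    · exact hWinv x hxW
  have hfr : Module.finrank ℂ (Submodule.span ℂ (Set.range ![x, T x])) = 2 := by
    rw [finrank_span_eq_card hli]
    simp
  have hWfin : FiniteDimensional ℂ W := Submodule.finiteDimensional_of_le hWV
  have hle : Module.finrank ℂ V ≤ Module.finrank ℂ W := by
    rw [hdim, ← hfr]
    exact Submodule.finrank_mono hspan
  exact Submodule.eq_of_le_of_finrank_le hWV hle
end

section
/- Let d > ρ > 0, θ₀ ∈ (0, π/2), and let θ ∈ ℂ with |Im θ| ≤ θ₀, and z ∈ ℂ with |z| < ρ. Then for every real t ≥ d and every real q ≥ 0 one has e^θ t − e^θ z + q ≠ 0 and (q + 1) / |e^θ t − e^θ z + q| ≤ e^{−Re θ} / (d − ρ) + 1 / cos θ₀. -/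
/-- resolvent bound, ground state case. For `d > ρ > 0`,
`θ₀ ∈ (0, π/2)`, `|Im θ| ≤ θ₀` and `|z| < ρ`, one has for all `t ≥ d` and `q ≥ 0` that
`e^θ t - e^θ z + q ≠ 0` and `(q+1)/|e^θ t - e^θ z + q| ≤ e^{-Re θ}/(d-ρ) + 1/cos θ₀`. -/
theorem resolvent_bound_ground_state
    (d ρ θ₀ : ℝ) (hρ : 0 < ρ) (hd : ρ < d)
    (hθ₀ : θ₀ ∈ Set.Ioo 0 (Real.pi / 2))
    (θ : ℂ) (hθ : |θ.im| ≤ θ₀)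
    (z : ℂ) (hz : ‖z‖ < ρ) :
    ∀ t : ℝ, d ≤ t → ∀ q : ℝ, 0 ≤ q →
      Complex.exp θ * (t : ℂ) - Complex.exp θ * z + (q : ℂ) ≠ 0 ∧
      (q + 1) / ‖Complex.exp θ * (t : ℂ) - Complex.exp θ * z + (q : ℂ)‖
        ≤ Real.exp (-θ.re) / (d - ρ) + 1 / Real.cos θ₀ := by
  obtain ⟨hθ₀0, hθ₀π⟩ := hθ₀
  intro t ht q hq
  have hpi := Real.pi_pos
  set φ := θ.im with hφ
  have hcosθ₀ : 0 < Real.cos θ₀ :=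
    Real.cos_pos_of_mem_Ioo ⟨by linarith, hθ₀π⟩
  have hcosφ : Real.cos θ₀ ≤ Real.cos φ := by
    rw [← Real.cos_abs φ]
    exact Real.cos_le_cos_of_nonneg_of_le_pi (abs_nonneg φ) (by linarith) hθ
  have hcosφ0 : 0 < Real.cos φ := lt_of_lt_of_le hcosθ₀ hcosφ
  set w : ℂ := Complex.exp θ * (t : ℂ) - Complex.exp θ * z + (q : ℂ) with hw
  have hzre : z.re ≤ ρ := le_trans (Complex.re_le_norm z) (le_of_lt hz)
  -- Bound A : |w| ≥ e^{θ.re} (d - ρ)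
  have hwu : w = Complex.exp θ * ((t : ℂ) - z + (q : ℂ) * Complex.exp (-θ)) := by
    have h1 : Complex.exp θ * Complex.exp (-θ) = 1 := by
      rw [← Complex.exp_add]; simp
    have h2 : Complex.exp θ * ((t : ℂ) - z + (q : ℂ) * Complex.exp (-θ))
        = Complex.exp θ * (t : ℂ) - Complex.exp θ * z
          + (q : ℂ) * (Complex.exp θ * Complex.exp (-θ)) := by ring
    rw [hw, h2, h1, mul_one]
  have hure : d - ρ ≤ ((t : ℂ) - z + (q : ℂ) * Complex.exp (-θ)).re := by
    have h1 : ((q : ℂ) * Complex.exp (-θ)).re = q * (Real.exp (-θ.re) * Real.cos φ) := by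
      rw [Complex.mul_re]
      simp [Complex.exp_re, Complex.exp_im, Real.cos_neg, Real.sin_neg, hφ]
    have h2 : 0 ≤ q * (Real.exp (-θ.re) * Real.cos φ) := by positivity
    simp only [Complex.add_re, Complex.sub_re, Complex.ofReal_re, h1]
    linarith
  have hA : Real.exp θ.re * (d - ρ) ≤ ‖w‖ := by
    rw [hwu, norm_mul, Complex.norm_exp]
    have : d - ρ ≤ ‖(t : ℂ) - z + (q : ℂ) * Complex.exp (-θ)‖ :=
      le_trans hure (Complex.re_le_norm _)
    exact mul_le_mul_of_nonneg_left this (Real.exp_nonneg _)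
  -- Bound B : |w| ≥ q cos θ₀
  have hB : q * Real.cos θ₀ ≤ ‖w‖ := by
    set v : ℂ := Complex.exp (-(φ : ℂ) * Complex.I) with hv
    have hvabs : ‖v‖ = 1 := by
      rw [hv, Complex.norm_exp]
      simp
    have hve : v * Complex.exp θ = (Real.exp θ.re : ℂ) := by
      rw [hv, ← Complex.exp_add]
      have : -(φ : ℂ) * Complex.I + θ = (θ.re : ℂ) := by
        apply Complex.ext <;> simp [hφ]
      rw [this, ← Complex.ofReal_exp]
    have hvw : ‖w‖ = ‖v * w‖ := by
      rw [norm_mul, hvabs, one_mul]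
    have hre : q * Real.cos θ₀ ≤ (v * w).re := by
      have hexp : (v * w).re = Real.exp θ.re * (t - z.re) + q * Real.cos φ := by
        have : v * w = (Real.exp θ.re : ℂ) * ((t : ℂ) - z) + (q : ℂ) * v := by
          rw [hw, ← hve]; ring
        rw [this]
        have hvre : v.re = Real.cos φ := by
          rw [hv, Complex.exp_re]
          simp
        simp only [Complex.add_re, Complex.mul_re, Complex.sub_re, Complex.sub_im,
          hvre, Complex.ofReal_re, Complex.ofReal_im, zero_mul, mul_zero, sub_zero,
          zero_sub, neg_zero]
      have h1 : 0 ≤ Real.exp θ.re * (t - z.re) := by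
        have : 0 ≤ t - z.re := by linarith
        positivity
      have h2 : q * Real.cos θ₀ ≤ q * Real.cos φ := mul_le_mul_of_nonneg_left hcosφ hq
      rw [hexp]; linarith
    calc q * Real.cos θ₀ ≤ (v * w).re := hre
      _ ≤ ‖v * w‖ := Complex.re_le_norm _
      _ = ‖w‖ := hvw.symm
  have hwpos : 0 < ‖w‖ := by
    have : 0 < Real.exp θ.re * (d - ρ) := by
      have : 0 < d - ρ := by linarith
      positivity
    linarith
  constructor
  · intro h
    rw [hw] at h
    rw [hw, h] at hwpos
    simp at hwpos
  · rw [div_le_iff₀ hwpos]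
    have he : Real.exp (-θ.re) = (Real.exp θ.re)⁻¹ := Real.exp_neg θ.re
    have hd' : 0 < d - ρ := by linarith
    have hepos : 0 < Real.exp θ.re := Real.exp_pos _
    have h1 : 1 ≤ Real.exp (-θ.re) / (d - ρ) * ‖w‖ := by
      rw [he, div_mul_eq_mul_div, le_div_iff₀ hd', one_mul, inv_mul_eq_div,
        le_div_iff₀ hepos]
      linarith [hA]
    have h2 : q ≤ 1 / Real.cos θ₀ * ‖w‖ := by
      rw [div_mul_eq_mul_div, one_mul, le_div_iff₀ hcosθ₀]
      linarith [hB]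
    have := add_le_add h1 h2
    linarith [this]
end

section
/- Let d > ρ > 0 and let θ ∈ ℂ with Im θ ∈ (0, π/2), and z ∈ ℂ with |z| ≤ ρ sin(Im θ). Then for every real t ≥ d and every real q one has | −e^θ t − e^θ z + q | ≥ e^{Re θ} sin(Im θ) (d − ρ) > 0. -/
/-- resolvent bound, resonance case. For `d > ρ > 0`,
`Im θ ∈ (0, π/2)` and `|z| ≤ ρ sin(Im θ)`, one has for all `t ≥ d` and all real `q` that
`|-e^θ t - e^θ z + q| ≥ e^{Re θ} sin(Im θ) (d - ρ) > 0`. -/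
theorem resolvent_bound_resonance
    (d ρ : ℝ) (hρ : 0 < ρ) (hd : ρ < d)
    (θ : ℂ) (hθ : θ.im ∈ Set.Ioo 0 (Real.pi / 2))
    (z : ℂ) (hz : ‖z‖ ≤ ρ * Real.sin θ.im) :
    ∀ t : ℝ, d ≤ t → ∀ q : ℝ,
      Real.exp θ.re * Real.sin θ.im * (d - ρ)
          ≤ ‖-(Complex.exp θ) * (t : ℂ) - Complex.exp θ * z + (q : ℂ)‖ ∧
        0 < Real.exp θ.re * Real.sin θ.im * (d - ρ) := by
  obtain ⟨h0, hpi⟩ := hθ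
  have hs : 0 < Real.sin θ.im :=
    Real.sin_pos_of_pos_of_lt_pi h0 (lt_trans hpi (by linarith [Real.pi_pos]))
  have hc : 0 < Real.exp θ.re := Real.exp_pos _
  intro t ht q
  refine ⟨?_, mul_pos (mul_pos hc hs) (by linarith)⟩
  set w : ℂ := -(Complex.exp θ) * (t : ℂ) - Complex.exp θ * z + (q : ℂ) with hw
  have him : w.im = -(Real.exp θ.re * Real.sin θ.im * t) - (Complex.exp θ * z).im := by
    simp [hw, Complex.exp_im, Complex.exp_re]
  have habs : ‖Complex.exp θ * z‖ ≤ Real.exp θ.re * (ρ * Real.sin θ.im) := by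
    rw [norm_mul, Complex.norm_exp]
    exact mul_le_mul_of_nonneg_left hz hc.le
  have h1 : -(Real.exp θ.re * (ρ * Real.sin θ.im)) ≤ (Complex.exp θ * z).im :=
    (abs_le.mp ((Complex.abs_im_le_norm _).trans habs)).1
  have h2 : Real.exp θ.re * Real.sin θ.im * (d - ρ) ≤ -w.im := by
    rw [him]
    have : Real.exp θ.re * Real.sin θ.im * d ≤ Real.exp θ.re * Real.sin θ.im * t :=
      mul_le_mul_of_nonneg_left ht (by positivity)
    nlinarith
  calc Real.exp θ.re * Real.sin θ.im * (d - ρ) ≤ -w.im := h2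
    _ ≤ |w.im| := neg_le_abs _
    _ ≤ ‖w‖ := Complex.abs_im_le_norm w
end
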